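/- For all integers $n \geq 1$ and $k$ with $1 \leq k \leq n$, there holds $[k]^2 \binom{2n}{n+k}_q q^{n-k} = [n]^2 \binom{2n}{n+k}_q - [2n][2n-1]\binom{2n-2}{n+k-1}_q$ as polynomials in $q$. -/
import Mathlib


open Polynomial Finset

/-- The `q`-integer `[n] = 1 + q + ⋯ + q^(n-1)` as a polynomial in `ℤ[q]`. -/
noncomputable def qint (n : ℕ) : Polynomial ℤ := ∑ i ∈ Finset.range n, Polynomial.X ^ i

/-- The Gaussian binomial coefficient `[n choose k]_q` in `ℤ[q]`, via the `q`-Pascal rule. -/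
noncomputable def qbinom : ℕ → ℕ → Polynomial ℤ
  | _, 0 => 1
  | 0, _ + 1 => 0
  | n + 1, k + 1 => qbinom n k + Polynomial.X ^ (k + 1) * qbinom n (k + 1)


lemma qint_ne_zero {n : ℕ} (h : 1 ≤ n) : qint n ≠ 0 := by
  intro hz
  have h2 : (qint n).eval 1 = n := by simp [qint]
  rw [hz] at h2
  simp at h2
  omega

lemma qint_mul (n : ℕ) : (X - 1) * qint n = X ^ n - 1 := by
  rw [qint, mul_comm]; exact geom_sum_mul X n

lemma qint_succ (m : ℕ) : qint (m + 1) = qint m + X ^ m := Finset.sum_range_succ _ _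

lemma qint_add (a b : ℕ) : qint (a + b) = qint a + X ^ a * qint b := by
  induction b with
  | zero => simp [qint]
  | succ b ih =>
    rw [Nat.add_succ, qint_succ, ih, qint_succ, pow_add]
    ring

noncomputable def qfact : ℕ → Polynomial ℤ
  | 0 => 1
  | n + 1 => qfact n * qint (n + 1)

lemma qfact_ne_zero (n : ℕ) : qfact n ≠ 0 := by
  induction n with
  | zero => simp [qfact]
  | succ n ih => exact mul_ne_zero ih (qint_ne_zero n.succ_pos)

lemma qbinom_zero (n : ℕ) : qbinom n 0 = 1 := by cases n <;> rfl

lemma qbinom_eq_zero : ∀ {n k : ℕ}, n < k → qbinom n k = 0 := by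
  intro n
  induction n with
  | zero => intro k h; cases k with | zero => omega | succ k => rfl
  | succ n ih =>
    intro k h
    cases k with
    | zero => omega
    | succ k =>
      show qbinom n k + X ^ (k + 1) * qbinom n (k + 1) = 0
      rw [ih (by omega), ih (by omega), mul_zero, add_zero]

lemma qbinom_self (n : ℕ) : qbinom n n = 1 := by
  induction n with
  | zero => rfl
  | succ n ih =>
    show qbinom n n + X ^ (n + 1) * qbinom n (n + 1) = 1
    rw [ih, qbinom_eq_zero (by omega), mul_zero, add_zero]

lemma qfact_qbinom : ∀ {n k : ℕ}, k ≤ n → qfact k * qfact (n - k) * qbinom n k = qfact n := by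
  intro n
  induction n with
  | zero => intro k h; interval_cases k; simp [qfact, qbinom_zero]
  | succ n ih =>
    intro k h
    cases k with
    | zero => simp [qfact, qbinom_zero]
    | succ k =>
      rcases eq_or_lt_of_le h with h' | h'
      · obtain rfl : k = n := by omega
        simp [qbinom_self, qfact]
      · have hk : k ≤ n := by omega
        have hk1 : k + 1 ≤ n := by omega
        have h1 := ih hk
        have h2 := ih hk1
        have e1 : n + 1 - (k + 1) = n - k := by omega
        have e2 : n - k = n - (k + 1) + 1 := by omega
        have hf1 : qfact (k + 1) = qfact k * qint (k + 1) := rfl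
        have hf2 : qfact (n + 1) = qfact n * qint (n + 1) := rfl
        have hf3 : qfact (n - k) = qfact (n - (k + 1)) * qint (n - k) := by
          rw [e2]; rfl
        have hq : qint (n + 1) = qint (k + 1) + X ^ (k + 1) * qint (n - k) := by
          rw [← qint_add]; congr 1; omega
        rw [show qbinom (n + 1) (k + 1) = qbinom n k + X ^ (k + 1) * qbinom n (k + 1) from rfl,
          e1, hf1, hf2, hf3, hq]
        rw [hf3] at h1
        rw [hf1] at h2
        linear_combination qint (k + 1) * h1 + X ^ (k + 1) * qint (n - k) * h2

lemma qint_qbinom_left {m j : ℕ} (hj : 1 ≤ j) (hm : j ≤ m) :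
    qint j * qbinom m j = qint m * qbinom (m - 1) (j - 1) := by
  obtain ⟨j, rfl⟩ := Nat.exists_eq_add_of_le hj
  obtain ⟨m, rfl⟩ := Nat.exists_eq_add_of_le (le_trans hj hm)
  rw [Nat.add_comm 1 j, Nat.add_comm 1 m] at *
  simp only [Nat.add_sub_cancel]
  apply mul_left_cancel₀ (mul_ne_zero (qfact_ne_zero j) (qfact_ne_zero (m - j)))
  have h1 := qfact_qbinom hm
  have h2 := qfact_qbinom (show j ≤ m by omega)
  rw [Nat.succ_sub_succ] at h1
  rw [show qfact (j + 1) = qfact j * qint (j + 1) from rfl,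
    show qfact (m + 1) = qfact m * qint (m + 1) from rfl] at h1
  linear_combination h1 - qint (m + 1) * h2

lemma qint_qbinom_right {m j : ℕ} (hm : j < m) :
    qint (m - j) * qbinom m j = qint m * qbinom (m - 1) j := by
  obtain ⟨c, rfl⟩ : ∃ c, m = j + c + 1 := ⟨m - j - 1, by omega⟩
  have e1 : j + c + 1 - j = c + 1 := by omega
  have e2 : j + c + 1 - 1 = j + c := by omega
  have e3 : j + c - j = c := by omega
  rw [e1, e2]
  apply mul_left_cancel₀ (mul_ne_zero (qfact_ne_zero j) (qfact_ne_zero c))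
  have h1 := qfact_qbinom (show j ≤ j + c + 1 by omega)
  have h2 := qfact_qbinom (show j ≤ j + c by omega)
  rw [e1] at h1
  rw [e3] at h2
  rw [show qfact (c + 1) = qfact c * qint (c + 1) from rfl,
    show qfact (j + c + 1) = qfact (j + c) * qint (j + c + 1) from rfl] at h1
  linear_combination h1 - qint (j + c + 1) * h2

lemma qint_sq_sub {n k : ℕ} (hkn : k ≤ n) :
    qint n ^ 2 - X ^ (n - k) * qint k ^ 2 = qint (n + k) * qint (n - k) := by
  obtain ⟨b, rfl⟩ : ∃ b, n = k + b := ⟨n - k, by omega⟩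
  rw [Nat.add_sub_cancel_left]
  have hX : (X - 1 : Polynomial ℤ) ≠ 0 := fun h => by
    have := congrArg (eval 0) h; simp at this
  apply mul_left_cancel₀ (pow_ne_zero 2 hX)
  have h1 := qint_mul (k + b)
  have h2 := qint_mul k
  have h3 := qint_mul b
  have h4 := qint_mul (k + b + k)
  linear_combination ((X - 1) * qint (k + b) + (X : Polynomial ℤ) ^ (k + b) - 1) * h1
    - X ^ b * ((X - 1) * qint k + (X : Polynomial ℤ) ^ k - 1) * h2
    - (X - 1) * qint (k + b + k) * h3 - ((X : Polynomial ℤ) ^ b - 1) * h4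

lemma lemB {n k : ℕ} (hk1 : 1 ≤ k) (hkn : k ≤ n) :
    qint (2 * n) * qint (2 * n - 1) * qbinom (2 * n - 2) (n + k - 1)
      = qint (n + k) * qint (n - k) * qbinom (2 * n) (n + k) := by
  rcases eq_or_lt_of_le hkn with rfl | hlt
  · rw [qbinom_eq_zero (show 2 * k - 2 < k + k - 1 by omega)]
    rw [show k - k = 0 from by omega, show qint 0 = 0 from by simp [qint]]
    ring
  · have h1 := qint_qbinom_left (show 1 ≤ n + k by omega) (show n + k ≤ 2 * n by omega)
    have h2 := qint_qbinom_right (show n + k - 1 < 2 * n - 1 by omega)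
    rw [show 2 * n - 1 - (n + k - 1) = n - k from by omega,
      show 2 * n - 1 - 1 = 2 * n - 2 from by omega] at h2
    linear_combination (-qint (2 * n)) * h2 - qint (n - k) * h1

theorem stmt_1 (n k : ℕ) (hk1 : 1 ≤ k) (hkn : k ≤ n) :
    (qint k) ^ 2 * qbinom (2 * n) (n + k) * Polynomial.X ^ (n - k)
      = (qint n) ^ 2 * qbinom (2 * n) (n + k)
        - qint (2 * n) * qint (2 * n - 1) * qbinom (2 * n - 2) (n + k - 1) := by
  have hA := qint_sq_sub hkn
  have hB := lemB hk1 hkn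
  linear_combination hB - qbinom (2 * n) (n + k) * hA
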